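/- arXiv:1702.01823 — 3 statements merged into one kernel-verified Lean document; each statement's English description precedes it below -/
import Mathlib

section
/- The hit rate h(C) = \lambda \sum_{i=1}^n p_i (1 - e^{-\lambda p_i T(C)}) is a strictly increasing function of the cache size C on (0,n), where T(C) is the characteristic time. -/
open Real Set Filter

/-- the hit rate `h(C)` is strictly increasing in the cache size. -/
theorem hit_rate_strictMono
    (n : ℕ) (hn : 0 < n) (lam : ℝ) (hlam : 0 < lam)
    (p : Fin n → ℝ) (hp : ∀ i, 0 < p i) (hsum : ∑ i, p i = 1)
    (T : ℝ → ℝ)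
    (hT : ∀ C ∈ Set.Ioo (0 : ℝ) n, 0 < T C ∧
      ∑ i, (1 - Real.exp (-(lam * p i * T C))) = C)
    (h : ℝ → ℝ)
    (hh : h = fun C => lam * ∑ i, p i * (1 - Real.exp (-(lam * p i * T C)))) :
    StrictMonoOn h (Set.Ioo (0 : ℝ) n) := by
  have hne : (Finset.univ : Finset (Fin n)).Nonempty := by
    have : Nonempty (Fin n) := ⟨⟨0, hn⟩⟩
    exact Finset.univ_nonempty
  intro C1 h1 C2 h2 hlt
  obtain ⟨hT1, hC1⟩ := hT C1 h1
  obtain ⟨hT2, hC2⟩ := hT C2 h2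
  have hTlt : T C1 < T C2 := by
    by_contra hle
    push_neg at hle
    have : C2 ≤ C1 := by
      rw [← hC1, ← hC2]
      apply Finset.sum_le_sum
      intro i _
      have hpi := hp i
      have : -(lam * p i * T C1) ≤ -(lam * p i * T C2) := by
        have : lam * p i * T C2 ≤ lam * p i * T C1 :=
          mul_le_mul_of_nonneg_left hle (by positivity)
        linarith
      linarith [Real.exp_le_exp.mpr this]
    linarith
  subst hh
  simp only
  apply mul_lt_mul_of_pos_left _ hlam
  apply Finset.sum_lt_sum_of_nonempty hne
  intro i _
  have hpi := hp i
  apply mul_lt_mul_of_pos_left _ hpi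
  have : -(lam * p i * T C2) < -(lam * p i * T C1) := by
    have : lam * p i * T C1 < lam * p i * T C2 :=
      mul_lt_mul_of_pos_left hTlt (by positivity)
    linarith
  linarith [Real.exp_lt_exp.mpr this]
end

section
/- The hit rate h(C) = \lambda \sum_{i=1}^n p_i (1 - e^{-\lambda p_i T(C)}) is a concave function of the cache size C on (0,n): its second derivative satisfies d^2 h / dC^2 \le 0. -/
open Real Set Filter

lemma aux1 (q : ℝ) (t : ℝ) : HasDerivAt (fun t : ℝ => 1 - Real.exp (-(q * t))) (q * Real.exp (-(q * t))) t := by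
  have h1 : HasDerivAt (fun t : ℝ => -(q * t)) (-q) t := by
    simpa using ((hasDerivAt_id t).const_mul q).fun_neg
  have h3 := h1.exp.const_sub 1
  exact h3.congr_deriv (by ring)

lemma aux2 (q : ℝ) (k : ℕ) (t : ℝ) :
    HasDerivAt (fun t : ℝ => q ^ k * Real.exp (-(q * t))) (-(q ^ (k+1) * Real.exp (-(q * t)))) t := by
  have h1 : HasDerivAt (fun t : ℝ => -(q * t)) (-q) t := by
    simpa using ((hasDerivAt_id t).const_mul q).fun_neg
  have h3 := h1.exp.const_mul (q ^ k)
  exact h3.congr_deriv (by ring)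

-- s_k as a sum
section
variable {n : ℕ} (q : Fin n → ℝ)

noncomputable def sfun (k : ℕ) : ℝ → ℝ := fun t => ∑ i, q i ^ k * Real.exp (-(q i * t))

lemma sfun_hasDeriv (k : ℕ) (t : ℝ) :
    HasDerivAt (sfun q k) (-(sfun q (k+1) t)) t := by
  have := HasDerivAt.fun_sum (fun i (_ : i ∈ Finset.univ) => aux2 (q i) k t)
  simp only [Finset.sum_neg_distrib] at this
  exact this

lemma sfun_pos (hn : 0 < n) (hq : ∀ i, 0 < q i) (k : ℕ) (t : ℝ) : 0 < sfun q k t := by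
  apply Finset.sum_pos (fun i _ => by have := hq i; positivity)
  exact Finset.univ_nonempty_iff.2 (Fin.pos_iff_nonempty.1 hn)

lemma sfun_cs (hq : ∀ i, 0 < q i) (t : ℝ) :
    sfun q 2 t ^ 2 ≤ sfun q 1 t * sfun q 3 t := by
  have key := Finset.sum_mul_sq_le_sq_mul_sq Finset.univ
    (fun i => Real.sqrt (q i ^ 1 * Real.exp (-(q i * t))))
    (fun i => Real.sqrt (q i ^ 3 * Real.exp (-(q i * t))))
  have e1 : ∀ i : Fin n, Real.sqrt (q i ^ 1 * Real.exp (-(q i * t))) *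
      Real.sqrt (q i ^ 3 * Real.exp (-(q i * t))) = q i ^ 2 * Real.exp (-(q i * t)) := by
    intro i
    have hqi := hq i
    rw [← Real.sqrt_mul (by positivity)]
    rw [show q i ^ 1 * Real.exp (-(q i * t)) * (q i ^ 3 * Real.exp (-(q i * t)))
        = (q i ^ 2 * Real.exp (-(q i * t))) ^ 2 by ring]
    exact Real.sqrt_sq (by positivity)
  have e2 : ∀ (m : ℕ) (i : Fin n), Real.sqrt (q i ^ m * Real.exp (-(q i * t))) ^ 2
      = q i ^ m * Real.exp (-(q i * t)) := fun m i => Real.sq_sqrt (by have := hq i; positivity)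
  simp only [e1, e2] at key
  simpa [sfun] using key
end

/-- the hit rate `h(C)` is concave in the cache size, with
nonpositive second derivative. -/
theorem hit_rate_concave
    (n : ℕ) (hn : 0 < n) (lam : ℝ) (hlam : 0 < lam)
    (p : Fin n → ℝ) (hp : ∀ i, 0 < p i) (hple : ∀ i, p i ≤ 1)
    (hmono : Monotone p) (hsum : ∑ i, p i = 1)
    (T : ℝ → ℝ)
    (hT : ∀ C ∈ Set.Ioo (0 : ℝ) n, 0 < T C ∧
      ∑ i, (1 - Real.exp (-(lam * p i * T C))) = C)
    (h : ℝ → ℝ)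
    (hh : h = fun C => lam * ∑ i, p i * (1 - Real.exp (-(lam * p i * T C)))) :
    ConcaveOn ℝ (Set.Ioo (0 : ℝ) n) h ∧
      ∀ C ∈ Set.Ioo (0 : ℝ) n, deriv (deriv h) C ≤ 0 := by
  set q : Fin n → ℝ := fun i => lam * p i with hq_def
  have hq : ∀ i, 0 < q i := fun i => mul_pos hlam (hp i)
  set g : ℝ → ℝ := fun t => ∑ i, (1 - Real.exp (-(q i * t))) with hg_def
  -- derivative of g
  have hg_deriv : ∀ t, HasDerivAt g (sfun q 1 t) t := by
    intro t
    have h0 : sfun q 1 t = ∑ i, q i * Real.exp (-(q i * t)) := by simp [sfun, pow_one]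
    rw [h0]
    exact HasDerivAt.fun_sum (fun i (_ : i ∈ Finset.univ) => aux1 (q i) t)
  have hgmono : StrictMono g := by
    apply strictMono_of_deriv_pos
    intro x
    rw [(hg_deriv x).deriv]
    exact sfun_pos q hn hq 1 x
  have hgT : ∀ C ∈ Set.Ioo (0 : ℝ) n, g (T C) = C := fun C hC => (hT C hC).2
  -- continuity of T on Ioo
  have hTcont : ∀ C ∈ Set.Ioo (0 : ℝ) n, ContinuousAt T C := by
    intro C hC
    rw [ContinuousAt]
    refine tendsto_order.2 ⟨?_, ?_⟩
    · intro a ha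
      have h1 : g a < C := by rw [← hgT C hC]; exact hgmono ha
      filter_upwards [eventually_gt_nhds h1, isOpen_Ioo.eventually_mem hC] with C' h2 h3
      have : g a < g (T C') := by rw [hgT C' h3]; exact h2
      exact hgmono.lt_iff_lt.1 this
    · intro a ha
      have h1 : C < g a := by rw [← hgT C hC]; exact hgmono ha
      filter_upwards [eventually_lt_nhds h1, isOpen_Ioo.eventually_mem hC] with C' h2 h3
      have : g (T C') < g a := by rw [hgT C' h3]; exact h2
      exact hgmono.lt_iff_lt.1 this
  -- derivative of T
  have hTderiv : ∀ C ∈ Set.Ioo (0 : ℝ) n, HasDerivAt T (sfun q 1 (T C))⁻¹ C := by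
    intro C hC
    refine HasDerivAt.of_local_left_inverse (hTcont C hC) (hg_deriv (T C))
      (ne_of_gt (sfun_pos q hn hq 1 (T C))) ?_
    filter_upwards [isOpen_Ioo.eventually_mem hC] with C' h3
    exact hgT C' h3
  -- derivative of phi
  set φ : ℝ → ℝ := fun t => lam * ∑ i, p i * (1 - Real.exp (-(q i * t))) with hφ_def
  have hφ_deriv : ∀ t, HasDerivAt φ (sfun q 2 t) t := by
    intro t
    have h1 : ∀ i : Fin n, HasDerivAt (fun t : ℝ => p i * (1 - Real.exp (-(q i * t))))
        (p i * (q i * Real.exp (-(q i * t)))) t := fun i => (aux1 (q i) t).const_mul (p i)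
    have h2 := (HasDerivAt.fun_sum (fun i (_ : i ∈ Finset.univ) => h1 i)).const_mul lam
    have h3 : lam * ∑ i, p i * (q i * Real.exp (-(q i * t))) = sfun q 2 t := by
      rw [Finset.mul_sum, sfun]
      refine Finset.sum_congr rfl fun i _ => ?_
      rw [hq_def]; ring
    rw [← h3]
    exact h2
  have hhφ : h = fun C => φ (T C) := hh
  -- first derivative of h
  have hD1 : ∀ C ∈ Set.Ioo (0 : ℝ) n,
      HasDerivAt h (sfun q 2 (T C) * (sfun q 1 (T C))⁻¹) C := by
    intro C hC
    rw [hhφ]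
    exact (hφ_deriv (T C)).comp C (hTderiv C hC)
  -- the function r ∘ T and its derivative
  have hr_deriv : ∀ t, HasDerivAt (fun t => sfun q 2 t * (sfun q 1 t)⁻¹)
      ((sfun q 2 t ^ 2 - sfun q 1 t * sfun q 3 t) / sfun q 1 t ^ 2) t := by
    intro t
    have h1 := (sfun_hasDeriv q 2 t).mul
      ((sfun_hasDeriv q 1 t).inv (ne_of_gt (sfun_pos q hn hq 1 t)))
    refine h1.congr_deriv ?_
    have hs1 : sfun q 1 t ≠ 0 := ne_of_gt (sfun_pos q hn hq 1 t)
    rw [Pi.inv_apply]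
    field_simp
    ring
  have hD2 : ∀ C ∈ Set.Ioo (0 : ℝ) n, HasDerivAt (deriv h)
      ((sfun q 2 (T C) ^ 2 - sfun q 1 (T C) * sfun q 3 (T C)) / sfun q 1 (T C) ^ 2
        * (sfun q 1 (T C))⁻¹) C := by
    intro C hC
    have hcomp := (hr_deriv (T C)).comp C (hTderiv C hC)
    refine hcomp.congr_of_eventuallyEq ?_
    filter_upwards [isOpen_Ioo.eventually_mem hC] with C' h3
    exact (hD1 C' h3).deriv
  have hval : ∀ C ∈ Set.Ioo (0 : ℝ) n,
      (sfun q 2 (T C) ^ 2 - sfun q 1 (T C) * sfun q 3 (T C)) / sfun q 1 (T C) ^ 2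
        * (sfun q 1 (T C))⁻¹ ≤ 0 := by
    intro C hC
    have hcs := sfun_cs q hq (T C)
    have hs1 := sfun_pos q hn hq 1 (T C)
    apply mul_nonpos_of_nonpos_of_nonneg
    · apply div_nonpos_of_nonpos_of_nonneg (by linarith) (by positivity)
    · positivity
  have hd2eq : ∀ C ∈ Set.Ioo (0 : ℝ) n, deriv (deriv h) C ≤ 0 := by
    intro C hC
    rw [(hD2 C hC).deriv]
    exact hval C hC
  refine ⟨?_, hd2eq⟩
  apply concaveOn_of_deriv2_nonpos (convex_Ioo (0:ℝ) (n:ℝ))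
  · intro C hC
    exact ((hD1 C hC).differentiableAt.continuousAt).continuousWithinAt
  · rw [isOpen_Ioo.interior_eq]
    exact fun C hC => (hD1 C hC).differentiableAt.differentiableWithinAt
  · rw [isOpen_Ioo.interior_eq]
    exact fun C hC => (hD2 C hC).differentiableAt.differentiableWithinAt
  · rw [isOpen_Ioo.interior_eq]
    intro C hC
    have : deriv^[2] h C = deriv (deriv h) C := by
      simp [Function.iterate_succ_apply']
    rw [this]
    exact hd2eq C hC
end

section
/- Suppose g_1, \dots, g_n are real numbers and 0 \le p_1 \le p_2 \le \dots \le p_n \le 1 and weights w_i \ge 0 are such that \sum_{i=1}^n w_i p_i g_i = 0, and there exists an index l with g_i \ge 0 for i \le l and g_i \le 0 for i > l. Then \sum_{i=1}^n w_i p_i^2 g_i \le 0. -/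
open Real Set

/-- single-sign-change weighted inequality used in the proof of the
concavity of the LRU hit rate. -/
theorem single_sign_change_weighted_ineq
    (n : ℕ) (g p w : Fin n → ℝ)
    (hp0 : ∀ i, 0 ≤ p i) (hp1 : ∀ i, p i ≤ 1) (hpmono : Monotone p)
    (hw : ∀ i, 0 ≤ w i)
    (hzero : ∑ i, w i * p i * g i = 0)
    (l : ℕ)
    (hgpos : ∀ i : Fin n, (i : ℕ) < l → 0 ≤ g i)
    (hgneg : ∀ i : Fin n, l ≤ (i : ℕ) → g i ≤ 0) :
    ∑ i, w i * p i ^ 2 * g i ≤ 0 := by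
  set c : ℝ := if h : l < n then p ⟨l, h⟩ else 1 with hc
  have key : ∀ i : Fin n, w i * p i ^ 2 * g i ≤ c * (w i * p i * g i) := by
    intro i
    by_cases hi : (i : ℕ) < l
    · have hg := hgpos i hi
      have hpc : p i ≤ c := by
        by_cases h : l < n
        · simp only [hc, dif_pos h]
          exact hpmono (by exact_mod_cast le_of_lt hi)
        · simp only [hc, dif_neg h]; exact hp1 i
      nlinarith [mul_nonneg (mul_nonneg (hw i) (hp0 i)) (mul_nonneg hg (sub_nonneg.2 hpc))]
    · have hg := hgneg i (le_of_not_gt hi)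
      have h : l < n := lt_of_le_of_lt (le_of_not_gt hi) i.isLt
      have hpc : c ≤ p i := by
        simp only [hc, dif_pos h]
        exact hpmono (by exact_mod_cast le_of_not_gt hi)
      nlinarith [mul_nonneg (mul_nonneg (hw i) (hp0 i)) (mul_nonneg (neg_nonneg.2 hg) (sub_nonneg.2 hpc))]
  calc ∑ i, w i * p i ^ 2 * g i ≤ ∑ i, c * (w i * p i * g i) :=
        Finset.sum_le_sum fun i _ => key i
    _ = c * ∑ i, w i * p i * g i := by rw [Finset.mul_sum]
    _ = 0 := by rw [hzero, mul_zero]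
end
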